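/- (Gaussian version of Theorem 1.) Let m ≥ 1, let F be a nonempty bounded subset of ℝ^m, let λ ≥ 0, and let w ∈ ℝ^m satisfy w = (1+λ)u − λv for some u, v ∈ conv(F). Then Ĝ(F) ≤ Ĝ(F ∪ {w}) ≤ (1+λ)·Ĝ(F). -/

import Mathlib

open Finset MeasureTheory ProbabilityTheory

namespace Stmt16Aux

noncomputable def gm (m : ℕ) : Measure (Fin m → ℝ) :=
  Measure.pi fun _ : Fin m => gaussianReal 0 1

instance (m : ℕ) : IsProbabilityMeasure (gm m) := by
  unfold gm; infer_instance

noncomputable def L (m : ℕ) (g v : Fin m → ℝ) : ℝ := (1 / (m : ℝ)) * ∑ i, g i * v i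

noncomputable def S (m : ℕ) (A : Set (Fin m → ℝ)) (g : Fin m → ℝ) : ℝ :=
  sSup ((fun v => (1 / (m : ℝ)) * ∑ i, g i * v i) '' A)

variable {m : ℕ}

lemma S_eq (A : Set (Fin m → ℝ)) (g : Fin m → ℝ) : S m A g = sSup (L m g '' A) := rfl

lemma L_add_left (g h v : Fin m → ℝ) : L m (g + h) v = L m g v + L m h v := by
  simp only [L, Pi.add_apply, add_mul, Finset.sum_add_distrib]
  ring

lemma L_neg_left (g v : Fin m → ℝ) : L m (-g) v = - L m g v := by
  simp only [L, Pi.neg_apply, neg_mul, Finset.sum_neg_distrib]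
  ring

lemma L_sub_right (g x y : Fin m → ℝ) : L m g (x - y) = L m g x - L m g y := by
  simp only [L, Pi.sub_apply, mul_sub, Finset.sum_sub_distrib]

lemma L_lin (g : Fin m → ℝ) : IsLinearMap ℝ (L m g) := by
  constructor
  · intro x y
    simp only [L, Pi.add_apply, mul_add, Finset.sum_add_distrib]
  · intro c x
    simp only [L, Pi.smul_apply, smul_eq_mul]
    have h : ∀ i, g i * (c * x i) = c * (g i * x i) := fun i => by ring
    simp_rw [h, ← Finset.mul_sum]
    ring

lemma abs_L_le (g v : Fin m → ℝ) : |L m g v| ≤ ‖v‖ * ∑ i, |g i| := by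
  have h0 : |(1 : ℝ) / m| ≤ 1 := by
    rw [abs_of_nonneg (by positivity)]
    rcases Nat.eq_zero_or_pos m with h | h
    · simp [h]
    · rw [div_le_one (by exact_mod_cast h)]
      exact_mod_cast h
  have h1 : |∑ i, g i * v i| ≤ ‖v‖ * ∑ i, |g i| := by
    calc |∑ i, g i * v i| ≤ ∑ i, |g i * v i| := Finset.abs_sum_le_sum_abs _ _
      _ ≤ ∑ i, |g i| * ‖v‖ := by
          refine Finset.sum_le_sum fun i _ => ?_
          rw [abs_mul]
          exact mul_le_mul_of_nonneg_left
            ((Real.norm_eq_abs (v i)) ▸ norm_le_pi_norm v i) (abs_nonneg _)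
      _ = ‖v‖ * ∑ i, |g i| := by rw [← Finset.sum_mul, mul_comm]
  calc |L m g v| = |(1 : ℝ) / m| * |∑ i, g i * v i| := by rw [L, abs_mul]
    _ ≤ 1 * (‖v‖ * ∑ i, |g i|) :=
        mul_le_mul h0 h1 (abs_nonneg _) zero_le_one
    _ = ‖v‖ * ∑ i, |g i| := one_mul _

lemma sum_abs_nonneg (g : Fin m → ℝ) : 0 ≤ ∑ i, |g i| :=
  Finset.sum_nonneg fun i _ => abs_nonneg _

lemma bddAbove_image {A : Set (Fin m → ℝ)} {R : ℝ} (hR : ∀ v ∈ A, ‖v‖ ≤ R)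
    (g : Fin m → ℝ) : BddAbove (L m g '' A) := by
  refine ⟨R * ∑ i, |g i|, ?_⟩
  rintro _ ⟨v, hv, rfl⟩
  calc L m g v ≤ |L m g v| := le_abs_self _
    _ ≤ ‖v‖ * ∑ i, |g i| := abs_L_le g v
    _ ≤ R * ∑ i, |g i| :=
        mul_le_mul_of_nonneg_right (hR v hv) (sum_abs_nonneg g)

lemma L_le_S {F : Set (Fin m → ℝ)} (hF : F.Nonempty) {R : ℝ}
    (hR : ∀ v ∈ F, ‖v‖ ≤ R) (g : Fin m → ℝ) {x : Fin m → ℝ}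
    (hx : x ∈ convexHull ℝ F) : L m g x ≤ S m F g := by
  rw [S_eq]
  have hsub : F ⊆ {y | L m g y ≤ sSup (L m g '' F)} := fun y hy =>
    le_csSup (bddAbove_image hR g) ⟨y, hy, rfl⟩
  exact convexHull_min hsub (convex_halfSpace_le (L_lin g) _) hx

lemma S_le_shift {A : Set (Fin m → ℝ)} (hA : A.Nonempty) {R : ℝ}
    (hR : ∀ v ∈ A, ‖v‖ ≤ R) (g h : Fin m → ℝ) :
    S m A g ≤ S m A h + R * ∑ i, |g i - h i| := by
  rw [S_eq]
  refine csSup_le (hA.image _) ?_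
  rintro _ ⟨v, hv, rfl⟩
  have hg : g = h + (g - h) := by abel
  have hL : L m g v = L m h v + L m (g - h) v := by
    conv_lhs => rw [hg]
    exact L_add_left h (g - h) v
  have h1 : L m h v ≤ S m A h := le_csSup (bddAbove_image hR h) ⟨v, hv, rfl⟩
  have h2 : L m (g - h) v ≤ R * ∑ i, |g i - h i| := by
    calc L m (g - h) v ≤ |L m (g - h) v| := le_abs_self _
      _ ≤ ‖v‖ * ∑ i, |(g - h) i| := abs_L_le _ v
      _ = ‖v‖ * ∑ i, |g i - h i| := by simp [Pi.sub_apply]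
      _ ≤ R * ∑ i, |g i - h i| := by
          refine mul_le_mul_of_nonneg_right (hR v hv) ?_
          exact Finset.sum_nonneg fun i _ => abs_nonneg _
  rw [hL]
  exact add_le_add h1 h2

lemma sum_abs_sub_le (g h : Fin m → ℝ) : ∑ i, |g i - h i| ≤ m * dist g h := by
  calc ∑ i, |g i - h i| ≤ ∑ _i : Fin m, dist g h := by
        refine Finset.sum_le_sum fun i _ => ?_
        rw [← Real.dist_eq]
        exact dist_le_pi_dist g h i
    _ = m * dist g h := by
        rw [Finset.sum_const, Finset.card_univ, Fintype.card_fin, nsmul_eq_mul]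

lemma S_continuous {A : Set (Fin m → ℝ)} (hA : A.Nonempty) {R : ℝ} (hR0 : 0 ≤ R)
    (hR : ∀ v ∈ A, ‖v‖ ≤ R) : Continuous (S m A) := by
  refine (LipschitzWith.of_dist_le_mul (K := ⟨R * m, by positivity⟩) ?_).continuous
  intro g h
  have key : ∀ a b : Fin m → ℝ, S m A a - S m A b ≤ R * m * dist a b := by
    intro a b
    have h1 := S_le_shift hA hR a b
    have h2 : R * ∑ i, |a i - b i| ≤ R * (m * dist a b) :=
      mul_le_mul_of_nonneg_left (sum_abs_sub_le a b) hR0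
    nlinarith [h1, h2]
  rw [Real.dist_eq]; change |_| ≤ R * m * dist g h; rw [abs_sub_le_iff]
  refine ⟨key g h, ?_⟩
  have := key h g
  rwa [dist_comm] at this

lemma abs_S_le {A : Set (Fin m → ℝ)} (hA : A.Nonempty) {R : ℝ}
    (hR : ∀ v ∈ A, ‖v‖ ≤ R) (g : Fin m → ℝ) :
    |S m A g| ≤ |S m A 0| + R * ∑ i, |g i| := by
  have h1 := S_le_shift hA hR g 0
  have h2 := S_le_shift hA hR 0 g
  simp only [Pi.zero_apply, sub_zero, zero_sub, abs_neg] at h1 h2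
  rw [abs_le]
  constructor
  · nlinarith [neg_abs_le (S m A 0), h2]
  · nlinarith [le_abs_self (S m A 0), h1]

lemma map_eval (i : Fin m) :
    (gm m).map (fun g => g i) = gaussianReal 0 1 := by
  refine Measure.ext fun s hs => ?_
  rw [Measure.map_apply (measurable_pi_apply i) hs]
  have hpre : (fun g : Fin m → ℝ => g i) ⁻¹' s =
      Set.pi Set.univ (Function.update (fun _ : Fin m => (Set.univ : Set ℝ)) i s) :=
    Set.eval_preimage
  rw [hpre, gm, Measure.pi_pi]
  rw [Finset.prod_eq_single i]
  · simp
  · intro j _ hj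
    simp [Function.update_of_ne hj]
  · simp

lemma integrable_abs_gaussian : Integrable (fun x : ℝ => |x|) (gaussianReal 0 1) := by
  rw [gaussianReal_of_var_ne_zero 0 one_ne_zero,
    integrable_withDensity_iff (measurable_gaussianPDF 0 1)
      (ae_of_all _ fun x => ENNReal.ofReal_lt_top)]
  have htr : ∀ x : ℝ, (gaussianPDF 0 1 x).toReal = gaussianPDFReal 0 1 x := fun x =>
    ENNReal.toReal_ofReal (gaussianPDFReal_nonneg _ _ _)
  simp_rw [htr]
  have hexp : Integrable (fun x : ℝ => Real.exp (-(1/2) * x ^ 2)) :=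
    integrable_exp_neg_mul_sq (by norm_num)
  have hx2 : Integrable (fun x : ℝ => x ^ 2 * Real.exp (-(1/2) * x ^ 2)) := by
    have h := integrable_rpow_mul_exp_neg_mul_sq (b := 1/2) (by norm_num)
      (s := ((2 : ℕ) : ℝ)) (by norm_num)
    simpa [Real.rpow_natCast] using h
  set c : ℝ := (Real.sqrt (2 * Real.pi))⁻¹ with hc
  have hc0 : 0 ≤ c := by positivity
  have hint : Integrable (fun x : ℝ =>
      c * (Real.exp (-(1/2) * x ^ 2) + x ^ 2 * Real.exp (-(1/2) * x ^ 2))) :=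
    (hexp.add hx2).const_mul c
  refine hint.mono' ?_ (ae_of_all _ fun x => ?_)
  · exact (measurable_id.abs.mul (measurable_gaussianPDFReal 0 1)).aestronglyMeasurable
  · have hpdf : gaussianPDFReal 0 1 x = c * Real.exp (-(1/2) * x ^ 2) := by
      simp only [gaussianPDFReal, hc, NNReal.coe_one, mul_one, sub_zero]
      congr 1
      ring
    rw [Real.norm_eq_abs, abs_mul, abs_abs, hpdf, abs_mul,
      abs_of_nonneg hc0, abs_of_nonneg (Real.exp_pos _).le]
    have habs : |x| ≤ 1 + x ^ 2 := by nlinarith [sq_abs x, sq_nonneg (|x| - 1)]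
    have hexp0 : 0 ≤ Real.exp (-(1/2) * x ^ 2) := (Real.exp_pos _).le
    nlinarith [mul_le_mul_of_nonneg_right habs hexp0]

lemma integrable_abs_eval (i : Fin m) :
    Integrable (fun g : Fin m → ℝ => |g i|) (gm m) := by
  have h1 := integrable_abs_gaussian
  have h2 := (integrable_map_measure (f := fun g : Fin m → ℝ => g i) (μ := gm m)
      (g := fun x : ℝ => |x|)
      (by rw [map_eval]; exact h1.aestronglyMeasurable)
      (measurable_pi_apply i).aemeasurable).mp
      (by rw [map_eval]; exact h1)
  exact h2

lemma integrable_of_bound {φ : (Fin m → ℝ) → ℝ} (hφ : Continuous φ) (c1 c2 : ℝ)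
    (hb : ∀ g, |φ g| ≤ c1 + c2 * ∑ i, |g i|) : Integrable φ (gm m) := by
  have hint : Integrable (fun g : Fin m → ℝ => c1 + c2 * ∑ i, |g i|) (gm m) := by
    refine (integrable_const c1).add ?_
    exact (integrable_finset_sum Finset.univ fun i _ => integrable_abs_eval i).const_mul c2
  exact hint.mono' hφ.aestronglyMeasurable (ae_of_all _ fun g => by
    rw [Real.norm_eq_abs]; exact hb g)

lemma neg_mp : MeasurePreserving (fun g : Fin m → ℝ => -g) (gm m) (gm m) := by
  have h1 : MeasurePreserving (fun x : ℝ => -x) (gaussianReal 0 1) (gaussianReal 0 1) := by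
    refine ⟨measurable_neg, ?_⟩
    have heq : (fun x : ℝ => -x) = fun x => (-1 : ℝ) * x := by funext x; ring
    rw [heq, gaussianReal_map_const_mul (-1)]
    norm_num
  have := measurePreserving_pi (fun _ : Fin m => gaussianReal 0 1)
    (fun _ : Fin m => gaussianReal 0 1) (fun _ => h1)
  exact this

end Stmt16Aux

open Stmt16Aux

/-- The empirical Gaussian complexity of a set `A ⊆ ℝ^m`:
`Ĝ(A) = E_{g ∼ N(0,1)^m}[sup_{v ∈ A} (1/m) Σ_i g_i v_i]`. -/
noncomputable def gaussComp (m : ℕ) (A : Set (Fin m → ℝ)) : ℝ :=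
  ∫ g, sSup ((fun v => (1 / (m : ℝ)) * ∑ i, g i * v i) '' A)
    ∂(Measure.pi fun _ : Fin m => gaussianReal 0 1)

theorem stmt16 (m : ℕ) (hm : 1 ≤ m) (F : Set (Fin m → ℝ)) (hF : F.Nonempty)
    (hFb : Bornology.IsBounded F) (lam : ℝ) (hlam : 0 ≤ lam) (w u v : Fin m → ℝ)
    (hu : u ∈ convexHull ℝ F) (hv : v ∈ convexHull ℝ F)
    (hw : w = (1 + lam) • u - lam • v) :
    gaussComp m F ≤ gaussComp m (F ∪ {w}) ∧
      gaussComp m (F ∪ {w}) ≤ (1 + lam) * gaussComp m F := by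
  classical
  obtain ⟨R₀, hR₀⟩ := hFb.exists_norm_le
  set R : ℝ := max R₀ ‖w‖ with hRdef
  have hR0 : 0 ≤ R := le_trans (norm_nonneg w) (le_max_right _ _)
  have hRF : ∀ x ∈ F, ‖x‖ ≤ R := fun x hx => (hR₀ x hx).trans (le_max_left _ _)
  have hRW : ∀ x ∈ F ∪ {w}, ‖x‖ ≤ R := by
    rintro x (hx | hx)
    · exact hRF x hx
    · rw [Set.mem_singleton_iff] at hx
      rw [hx]
      exact le_max_right _ _
  have hFW : (F ∪ {w}).Nonempty := hF.mono Set.subset_union_left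
  -- notation
  have hGF : gaussComp m F = ∫ g, S m F g ∂(gm m) := rfl
  have hGW : gaussComp m (F ∪ {w}) = ∫ g, S m (F ∪ {w}) g ∂(gm m) := rfl
  -- the extra function
  set h : (Fin m → ℝ) → ℝ := fun g => lam * max (L m g (u - v)) 0 with hhdef
  -- pointwise facts
  have hSmono : ∀ g, S m F g ≤ S m (F ∪ {w}) g := by
    intro g
    rw [S_eq, S_eq]
    exact csSup_le_csSup (bddAbove_image hRW g) (hF.image _)
      (Set.image_mono Set.subset_union_left)
  have hSW_eq : ∀ g, S m (F ∪ {w}) g = max (S m F g) (L m g w) := by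
    intro g
    rw [S_eq, S_eq, Set.image_union, Set.image_singleton,
      csSup_union (bddAbove_image hRF g) (hF.image _) bddAbove_singleton
        (Set.singleton_nonempty _), csSup_singleton]
  have hLw : ∀ g, L m g w = (1 + lam) * L m g u - lam * L m g v := by
    intro g
    rw [hw, L_sub_right]
    rw [(L_lin g).map_smul, (L_lin g).map_smul]
    simp [smul_eq_mul]
  have hLuv : ∀ g, L m g (u - v) = L m g u - L m g v := fun g => L_sub_right g u v
  have hkey1 : ∀ g, S m (F ∪ {w}) g ≤ S m F g + h g := by
    intro g
    rw [hSW_eq g]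
    have hh0 : 0 ≤ h g := mul_nonneg hlam (le_max_right _ _)
    refine max_le (by linarith) ?_
    have ha : L m g u ≤ S m F g := L_le_S hF hRF g hu
    have hb : lam * (L m g u - L m g v) ≤ h g := by
      rw [hhdef, ← hLuv g]
      exact mul_le_mul_of_nonneg_left (le_max_left _ _) hlam
    rw [hLw g]
    have : (1 + lam) * L m g u - lam * L m g v
        = L m g u + lam * (L m g u - L m g v) := by ring
    rw [this]
    linarith
  have hkey2 : ∀ g, h g + h (-g) ≤ lam * (S m F g + S m F (-g)) := by
    intro g
    have hx1 : L m g (u - v) ≤ S m F g + S m F (-g) := by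
      have h1 : L m g u ≤ S m F g := L_le_S hF hRF g hu
      have h2 : L m (-g) v ≤ S m F (-g) := L_le_S hF hRF (-g) hv
      rw [L_neg_left] at h2
      rw [hLuv g]
      linarith
    have hx2 : - L m g (u - v) ≤ S m F g + S m F (-g) := by
      have h1 : L m (-g) u ≤ S m F (-g) := L_le_S hF hRF (-g) hu
      have h2 : L m g v ≤ S m F g := L_le_S hF hRF g hv
      rw [L_neg_left] at h1
      rw [hLuv g]
      linarith
    have hneg : L m (-g) (u - v) = - L m g (u - v) := L_neg_left g (u - v)
    have hmax : max (L m g (u - v)) 0 + max (- L m g (u - v)) 0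
        ≤ S m F g + S m F (-g) := by
      rcases le_total (L m g (u - v)) 0 with hle | hle
      · rw [max_eq_right hle, max_eq_left (by linarith)]
        linarith
      · rw [max_eq_left hle, max_eq_right (by linarith)]
        linarith
    calc h g + h (-g) = lam * (max (L m g (u - v)) 0 + max (- L m g (u - v)) 0) := by
          show lam * max (L m g (u - v)) 0 + lam * max (L m (-g) (u - v)) 0 = _
          rw [hneg]; ring
      _ ≤ lam * (S m F g + S m F (-g)) := mul_le_mul_of_nonneg_left hmax hlam
  -- continuity and integrability
  have hcontF : Continuous (S m F) := S_continuous hF hR0 hRF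
  have hcontW : Continuous (S m (F ∪ {w})) := S_continuous hFW hR0 hRW
  have hconth : Continuous h := by
    have hL : Continuous (fun g => L m g (u - v)) := by
      unfold L
      exact continuous_const.mul
        (continuous_finset_sum _ fun i _ => (continuous_apply i).mul continuous_const)
    exact continuous_const.mul (hL.max continuous_const)
  have hintF : Integrable (S m F) (gm m) := by
    refine integrable_of_bound hcontF (|S m F 0|) R fun g => ?_
    exact abs_S_le hF hRF g
  have hintW : Integrable (S m (F ∪ {w})) (gm m) := by
    refine integrable_of_bound hcontW (|S m (F ∪ {w}) 0|) R fun g => ?_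
    exact abs_S_le hFW hRW g
  have hinth : Integrable h (gm m) := by
    refine integrable_of_bound hconth 0 (lam * ‖u - v‖) fun g => ?_
    rw [hhdef, zero_add, abs_mul, abs_of_nonneg hlam, mul_assoc]
    refine mul_le_mul_of_nonneg_left ?_ hlam
    rw [abs_of_nonneg (le_max_right _ _)]
    refine max_le ((le_abs_self _).trans (abs_L_le g (u - v))) ?_
    positivity
  -- neg composition
  have hmp : MeasurePreserving (fun g : Fin m → ℝ => -g) (gm m) (gm m) := neg_mp
  have hemb : MeasurableEmbedding (fun g : Fin m → ℝ => -g) :=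
    (Homeomorph.neg (Fin m → ℝ)).measurableEmbedding
  have hintFn : Integrable (fun g => S m F (-g)) (gm m) :=
    (hmp.integrable_comp hintF.aestronglyMeasurable).mpr hintF
  have hinthn : Integrable (fun g => h (-g)) (gm m) :=
    (hmp.integrable_comp hinth.aestronglyMeasurable).mpr hinth
  have hIFn : ∫ g, S m F (-g) ∂(gm m) = ∫ g, S m F g ∂(gm m) :=
    hmp.integral_comp hemb (S m F)
  have hIhn : ∫ g, h (-g) ∂(gm m) = ∫ g, h g ∂(gm m) :=
    hmp.integral_comp hemb h
  -- integral of h bounded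
  have hIh : ∫ g, h g ∂(gm m) ≤ lam * ∫ g, S m F g ∂(gm m) := by
    have hmono : ∫ g, (h g + h (-g)) ∂(gm m)
        ≤ ∫ g, lam * (S m F g + S m F (-g)) ∂(gm m) := by
      refine integral_mono (hinth.add hinthn) (((hintF.add hintFn)).const_mul lam)
        fun g => hkey2 g
    have e1 : ∫ g, (h g + h (-g)) ∂(gm m)
        = (∫ g, h g ∂(gm m)) + ∫ g, h (-g) ∂(gm m) := integral_add hinth hinthn
    have e2' : ∫ g, (S m F g + S m F (-g)) ∂(gm m)
        = (∫ g, S m F g ∂(gm m)) + ∫ g, S m F (-g) ∂(gm m) := integral_add hintF hintFn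
    have e2 : ∫ g, lam * (S m F g + S m F (-g)) ∂(gm m)
        = lam * ((∫ g, S m F g ∂(gm m)) + ∫ g, S m F (-g) ∂(gm m)) := by
      rw [integral_const_mul, e2']
    have hrw : lam * ((∫ g, S m F g ∂(gm m)) + ∫ g, S m F g ∂(gm m))
        = 2 * (lam * ∫ g, S m F g ∂(gm m)) := by ring
    rw [e2, hIFn, hrw] at hmono
    rw [e1, hIhn] at hmono
    linarith
  constructor
  · rw [hGF, hGW]
    exact integral_mono hintF hintW hSmono
  · rw [hGF, hGW]
    have hstep : ∫ g, S m (F ∪ {w}) g ∂(gm m)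
        ≤ ∫ g, (S m F g + h g) ∂(gm m) :=
      integral_mono hintW (hintF.add hinth) hkey1
    rw [integral_add hintF hinth] at hstep
    have : (1 + lam) * ∫ g, S m F g ∂(gm m)
        = (∫ g, S m F g ∂(gm m)) + lam * ∫ g, S m F g ∂(gm m) := by ring
    rw [this]
    linarith
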